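/- Let L and L' be real normed spaces, let B : L × L → L' be a continuous symmetric bilinear map, and let Q : L → L' be given by Q(u) = B(u,u). If for all u, v ∈ L the equality Q(u) = Q(v) implies v = u or v = -u, then B is nondegenerate: for every u ∈ L with u ≠ 0 and every v ∈ L, B(u,v) = 0 implies v = 0. -/
import Mathlib


/-- If the quadratic operator `Q(u) = B(u,u)` of a continuous
symmetric bilinear map `B` satisfies `Q(u) = Q(v) → v = ±u`, then `B` is
nondegenerate. -/
theorem nondegenerate_of_atMostTwoSolutions
    {L L' : Type*} [NormedAddCommGroup L] [NormedSpace ℝ L]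
    [NormedAddCommGroup L'] [NormedSpace ℝ L']
    (B : L → L → L')
    (hBcont : Continuous (fun p : L × L => B p.1 p.2))
    (hBsymm : ∀ u v : L, B u v = B v u)
    (hBaddl : ∀ u v w : L, B (u + v) w = B u w + B v w)
    (hBsmull : ∀ (k : ℝ) (u v : L), B (k • u) v = k • B u v)
    (hBaddr : ∀ u v w : L, B u (v + w) = B u v + B u w)
    (hBsmulr : ∀ (k : ℝ) (u v : L), B u (k • v) = k • B u v)
    (Q : L → L') (hQ : ∀ u : L, Q u = B u u)
    (h : ∀ u v : L, Q u = Q v → v = u ∨ v = -u) :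
    ∀ u : L, u ≠ 0 → ∀ v : L, B u v = 0 → v = 0 := by
  intro u hu v hBuv
  have hnegr : ∀ a b : L, B a (-b) = -B a b := by
    intro a b
    have := hBsmulr (-1) a b
    simpa using this
  have hnegl : ∀ a b : L, B (-a) b = -B a b := by
    intro a b
    have := hBsmull (-1) a b
    simpa using this
  have hsub : u - v = u + (-v) := sub_eq_add_neg u v
  have key : Q (u + v) = Q (u - v) := by
    rw [hQ, hQ, hsub]
    rw [hBaddl, hBaddl, hBaddr, hBaddr, hBaddr, hBaddr]
    rw [hnegr, hnegr, hnegl, hnegl, hBsymm v u, hBuv]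
    abel
  rcases h (u + v) (u - v) key with h1 | h2
  · -- u - v = u + v → v = 0
    have h2v : v + v = 0 := by
      calc v + v = (u + v) - (u - v) := by abel
        _ = 0 := by rw [← h1]; abel
    have : (2 : ℝ) • v = 0 := by
      rw [two_smul]; exact h2v
    have := smul_eq_zero.mp this
    rcases this with h | h
    · norm_num at h
    · exact h
  · -- u - v = -(u + v) → u + u = 0 → u = 0, contradiction
    exfalso
    have h2u : u + u = 0 := by
      have : (u - v) + (u + v) = 0 := by rw [h2]; abel
      calc u + u = (u - v) + (u + v) := by abel
        _ = 0 := this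
    have : (2 : ℝ) • u = 0 := by rw [two_smul]; exact h2u
    rcases smul_eq_zero.mp this with h | h
    · norm_num at h
    · exact hu h
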